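/- Let K be a field, A an algebra over K (a K-vector space with a bilinear product, no identities assumed), and B a linear basis of A. If B is an i-division basis of A, then B is a semi-division basis of A. -/

import Mathlib

/-!  Nonassociative algebras as vector spaces with a bilinear product. -/

variable {K V : Type*} [Field K] [AddCommGroup V] [Module K V]

/-- `I` is a (two-sided) ideal of the algebra `(V, mul)`. -/
def IsIdeal (mul : V →ₗ[K] V →ₗ[K] V) (I : Submodule K V) : Prop :=
  ∀ a : V, ∀ x ∈ I, mul a x ∈ I ∧ mul x a ∈ I

/-- The ideal of `(V, mul)` generated by an element `c`. -/
def idealGen (mul : V →ₗ[K] V →ₗ[K] V) (c : V) : Submodule K V :=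
  sInf {I : Submodule K V | IsIdeal mul I ∧ c ∈ I}

/-- The annihilator `{x : x·A = A·x = 0}` of `(V, mul)` is zero. -/
def HasZeroAnn (mul : V →ₗ[K] V →ₗ[K] V) : Prop :=
  ∀ x : V, (∀ a : V, mul x a = 0 ∧ mul a x = 0) → x = 0

/-- `(V, mul)` is a simple algebra: nonzero product, only trivial ideals. -/
def IsSimpleAlgebra (mul : V →ₗ[K] V →ₗ[K] V) : Prop :=
  mul ≠ 0 ∧ ∀ I : Submodule K V, IsIdeal mul I → I = ⊥ ∨ I = ⊤

/-- `I` is an ideal of `(V, mul)` which is simple as an algebra (with the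
restricted product): nonzero product, and its only ideals are `0` and `I`. -/
def IsSimpleIdeal (mul : V →ₗ[K] V →ₗ[K] V) (I : Submodule K V) : Prop :=
  IsIdeal mul I ∧ (∃ x ∈ I, ∃ y ∈ I, mul x y ≠ 0) ∧
    ∀ J : Submodule K V, J ≤ I →
      (∀ a ∈ I, ∀ x ∈ J, mul a x ∈ J ∧ mul x a ∈ J) → J = ⊥ ∨ J = I

/-- `(V, mul)` is semisimple: it is the direct sum of a family of ideals,
each of which is simple as an algebra. -/
def IsSemisimple (mul : V →ₗ[K] V →ₗ[K] V) : Prop :=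
  ∃ 𝒮 : Set (Submodule K V), (∀ I ∈ 𝒮, IsSimpleIdeal mul I) ∧
    sSupIndep 𝒮 ∧ sSup 𝒮 = ⊤

variable {ι : Type*}

/-- The set `S_{e_i}` attached to a basis element `e_i = b i`. -/
def Sset (mul : V →ₗ[K] V →ₗ[K] V) (b : Module.Basis ι K V) (i : ι) : Set V :=
  {v | ∃ j : ι, v = b j ∧ (mul (b i) (b j) ≠ 0 ∨ mul (b j) (b i) ≠ 0)}

/-- `B` is an i-division basis. -/
def IsIDivisionBasis (mul : V →ₗ[K] V →ₗ[K] V) (b : Module.Basis ι K V) : Prop :=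
  ∀ (i : ι) (x : V),
    (mul (b i) x ≠ 0 →
      b i ∈ idealGen mul (mul (b i) x) ∧ x ∈ idealGen mul (mul (b i) x)) ∧
    (mul x (b i) ≠ 0 →
      b i ∈ idealGen mul (mul x (b i)) ∧ x ∈ idealGen mul (mul x (b i)))

/-- `B` is a weak-division basis: the i-division condition is only required
for `x` in `M_{e_i}`, the span of `S_{e_i}`. -/
def IsWeakDivisionBasis (mul : V →ₗ[K] V →ₗ[K] V) (b : Module.Basis ι K V) : Prop :=
  ∀ i : ι, ∀ x ∈ Submodule.span K (Sset mul b i),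
    (mul (b i) x ≠ 0 →
      b i ∈ idealGen mul (mul (b i) x) ∧ x ∈ idealGen mul (mul (b i) x)) ∧
    (mul x (b i) ≠ 0 →
      b i ∈ idealGen mul (mul x (b i)) ∧ x ∈ idealGen mul (mul x (b i)))

/-- The set `P_{e_i}` attached to a basis element `e_i = b i`, where
`b.coord i` is the coordinate functional `p_{e_i}`. -/
def Pset (mul : V →ₗ[K] V →ₗ[K] V) (b : Module.Basis ι K V) (i : ι) : Set V :=
  {v | ∃ j : ι, v = b j ∧
    ((∃ r : ι, b.coord i (mul (b j) (b r)) ≠ 0) ∨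
     (∃ s : ι, b.coord i (mul (b s) (b j)) ≠ 0))}

/-- The set `P_{e_i}·P_{e_i}` of products of pairs of elements of `P_{e_i}`. -/
def PPset (mul : V →ₗ[K] V →ₗ[K] V) (b : Module.Basis ι K V) (i : ι) : Set V :=
  {v | ∃ x ∈ Pset mul b i, ∃ y ∈ Pset mul b i, v = mul x y}

/-- `B` is a semi-division basis. -/
def IsSemiDivisionBasis (mul : V →ₗ[K] V →ₗ[K] V) (b : Module.Basis ι K V) : Prop :=
  IsWeakDivisionBasis mul b ∧
  ∀ i : ι, ∀ x ∈ PPset mul b i, ∀ e ∈ Sset mul b i,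
    (mul x e ≠ 0 →
      e ∈ idealGen mul (mul x e) ∧ x ∈ idealGen mul (mul x e)) ∧
    (mul e x ≠ 0 →
      e ∈ idealGen mul (mul e x) ∧ x ∈ idealGen mul (mul e x))

/-- Any i-division basis is a semi-division basis. -/
theorem semiDivisionBasis_of_iDivisionBasis
    (mul : V →ₗ[K] V →ₗ[K] V) (b : Module.Basis ι K V)
    (h : IsIDivisionBasis mul b) :
    IsSemiDivisionBasis mul b := by
  refine ⟨fun i x _ => h i x, fun i x _ e he => ?_⟩
  obtain ⟨j, rfl, -⟩ := he
  exact ⟨fun hne => (h j x).2 hne, fun hne => (h j x).1 hne⟩
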